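/- The anchored burning map φ_{D,Λ} : R_Λ → T_Λ is injective: if η₁ ≠ η₂ are recurrent configurations on the wired graph G_Λ, then the spanning trees produced by the anchored burning bijection (with phases determined by the anchor D) are distinct. Consequently, since |R_Λ| = |T_Λ|, φ_{D,Λ} is a bijection. -/

import Mathlib

open Finset
open scoped Classical

namespace Anchored

variable {V : Type*} [DecidableEq V]

/-- iterating a partial parent map; `none` represents the sink. -/
def iterP (p : V → Option V) : ℕ → V → Option V
  | 0, v => some v
  | n + 1, v => (p v).bind (iterP p n)

/-- walks in the multigraph `a` avoiding the set `A` -/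
def ReachAvoid (a : V → V → ℕ) (A : Finset V) (u v : V) : Prop :=
  ∃ (nn : ℕ) (f : ℕ → V), f 0 = u ∧ f nn = v ∧ (∀ j ≤ nn, f j ∉ A) ∧
    ∀ j < nn, 0 < a (f j) (f (j + 1))

/-- oriented edges (with multiplicity index) from `v` into the finite set `T` -/
def edgesTo (a : V → V → ℕ) (v : V) (T : Finset V) : Finset (V × ℕ) :=
  T.biUnion fun w => (Finset.range (a v w)).image fun i => (w, i)

variable (a : V → V → ℕ) (S : Finset V) (out : V → Finset V)

/-- number of edges from `v` to the sink of the wired graph on `S`;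
`out v` is the set of heads of sink edges at `v` (actual vertices of `G`). -/
def sk (v : V) : ℕ := ∑ w ∈ out v, a v w

/-- degree of `v` in the wired graph on `S` -/
def degS (v : V) : ℕ := sk a out v + ∑ w ∈ S, a v w

variable (η : V → ℕ) (D : ℕ → Finset V) (kk : ℕ)

/-- number of global steps allotted to each phase of the anchored burning -/
def plen : ℕ := S.card + 1

/-- Flattened anchored burning process: `U m` is the set of unburnt vertices
after `m` global steps; phase `i` (for `i = 1, …, kk + 1`) occupies the steps
`m ∈ [(i-1)·plen, i·plen)` and forbids burning the vertices of `D (kk - i + 1)`.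
A vertex burns when its height is at least its number of edges to unburnt
vertices (the sink being burnt at time `0`). -/
def U : ℕ → Finset V
  | 0 => S
  | m + 1 => (U m).filter fun v =>
      v ∈ D (kk - m / plen S) ∨ η v < ∑ w ∈ U m, a v w

/-- the (anchored) burning time of `v` -/
noncomputable def τ (v : V) : ℕ := sInf {m | v ∉ U a S η D kk m}

/-- number of oriented edges from `v` whose head was burnt strictly before `v`
(including the sink edges) -/
noncomputable def mv (v : V) : ℕ :=
  sk a out v + ∑ w ∈ S \ U a S η D kk (τ a S η D kk v - 1), a v w

/-- the set of candidate tree edges at `v`: the oriented edges from `v` to the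
layer burnt at the previous step (at the first step of a phase: to everything
burnt in earlier phases, including the sink) -/
noncomputable def Fv (v : V) : Finset (V × ℕ) :=
  if (τ a S η D kk v - 1) % plen S = 0 then
    edgesTo a v (out v) ∪ edgesTo a v (S \ U a S η D kk (τ a S η D kk v - 1))
  else
    edgesTo a v
      (U a S η D kk (τ a S η D kk v - 2) \ U a S η D kk (τ a S η D kk v - 1))

/-- `Spec … prec e` says that `e` encodes the spanning tree assigned to `η` by
the anchored burning bijection: each `v ∈ S` gets the edge of `F_v` having
exactly `ℓ` predecessors in the ordering `prec v`, where
`η v = deg v - m_v + ℓ`. -/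
def Spec (prec : V → (V × ℕ) → (V × ℕ) → Prop) (e : V → Option (V × ℕ)) : Prop :=
  (∀ v ∉ S, e v = none) ∧
  ∀ v ∈ S, ∃ ed : V × ℕ, e v = some ed ∧ ed ∈ Fv a S out η D kk v ∧
    η v + mv a S out η D kk v =
      degS a S out v + ((Fv a S out η D kk v).filter fun f => prec v f ed).card

/-- the parent map (toward the sink) of an encoded spanning tree -/
def par (e : V → Option (V × ℕ)) (v : V) : Option V :=
  (e v).bind fun p => if p.1 ∈ S then some p.1 else none

/-- spanning trees of the wired graph on `S`, oriented toward the sink: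
every vertex of `S` carries exactly one valid oriented edge, and following
these edges one reaches the sink. -/
def IsSpanningTree (e : V → Option (V × ℕ)) : Prop :=
  (∀ v ∉ S, e v = none) ∧
  (∀ v ∈ S, ∃ w i, e v = some (w, i) ∧ i < a v w ∧ (w ∈ S ∨ w ∈ out v)) ∧
  (∀ v ∈ S, ∃ m, iterP (par S e) m v = none)

/-- stable configurations on the wired graph on `S` -/
def Stable : Prop := ∀ v ∈ S, η v < degS a S out v

/-- ample for every nonempty subset of `S` -/
def Ample : Prop := ∀ F ⊆ S, F.Nonempty → ∃ x ∈ F, ∑ y ∈ F, a x y ≤ η x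

/-- recurrent configurations on the wired graph on `S` -/
def Recurrent : Prop := Stable a S out η ∧ Ample a S η

end Anchored
set_option linter.unusedSectionVars false
namespace Anchored

variable {V : Type*} [DecidableEq V]
variable (a : V → V → ℕ) (S : Finset V) (out : V → Finset V)
variable (η : V → ℕ) (D : ℕ → Finset V) (kk : ℕ)

lemma plen_pos : 0 < plen S := Nat.succ_pos _

lemma mem_edgesTo {v : V} {T : Finset V} {p : V × ℕ} :
    p ∈ edgesTo a v T ↔ p.1 ∈ T ∧ p.2 < a v p.1 := by
  unfold edgesTo
  simp only [Finset.mem_biUnion, Finset.mem_image, Finset.mem_range]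
  constructor
  · rintro ⟨w, hw, i, hi, rfl⟩; exact ⟨hw, hi⟩
  · rintro ⟨h1, h2⟩; exact ⟨p.1, h1, p.2, h2, rfl⟩

lemma card_edgesTo (v : V) (T : Finset V) :
    (edgesTo a v T).card = ∑ w ∈ T, a v w := by
  unfold edgesTo
  rw [Finset.card_biUnion]
  · refine Finset.sum_congr rfl fun w _ => ?_
    rw [Finset.card_image_of_injective _ (fun i j h => by simpa using h), Finset.card_range]
  · intro x hx y hy hxy
    simp only [Finset.disjoint_left, Finset.mem_image, Finset.mem_range]
    rintro p ⟨i, hi, rfl⟩ ⟨j, hj, h⟩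
    exact absurd (congrArg Prod.fst h).symm hxy

lemma U_succ (m : ℕ) : U a S η D kk (m + 1) =
    (U a S η D kk m).filter fun v =>
      v ∈ D (kk - m / plen S) ∨ η v < ∑ w ∈ U a S η D kk m, a v w := rfl

lemma U_subset_S : ∀ m, U a S η D kk m ⊆ S
  | 0 => Finset.Subset.refl S
  | m + 1 => (Finset.filter_subset _ _).trans (U_subset_S m)

lemma U_succ_subset (m : ℕ) : U a S η D kk (m + 1) ⊆ U a S η D kk m :=
  Finset.filter_subset _ _

lemma U_anti : ∀ {m n : ℕ}, m ≤ n → U a S η D kk n ⊆ U a S η D kk m := by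
  intro m n h
  induction n with
  | zero => have : m = 0 := Nat.le_zero.mp h
            subst this; exact Finset.Subset.refl _
  | succ n ih =>
    rcases Nat.lt_or_ge m (n+1) with h'|h'
    · exact (U_succ_subset a S η D kk n).trans (ih (Nat.lt_succ_iff.mp h'))
    · have : m = n+1 := le_antisymm h h'
      subst this; exact Finset.Subset.refl _

lemma stall_step {m : ℕ} (hdiv : (m + 1) / plen S = m / plen S)
    (hU : U a S η D kk (m + 1) = U a S η D kk m) :
    U a S η D kk (m + 2) = U a S η D kk (m + 1) := by
  have : U a S η D kk (m + 2) = (U a S η D kk (m+1)).filter fun v =>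
      v ∈ D (kk - (m+1) / plen S) ∨ η v < ∑ w ∈ U a S η D kk (m+1), a v w := rfl
  rw [this, hU, hdiv, ← U_succ, hU]

lemma exists_stall (i : ℕ) :
    ∃ j < plen S, U a S η D kk (i * plen S + j + 1) = U a S η D kk (i * plen S + j) := by
  by_contra hc
  push_neg at hc
  have key : ∀ j ≤ plen S, (U a S η D kk (i * plen S + j)).card + j ≤ S.card := by
    intro j hj
    induction j with
    | zero => simpa using Finset.card_le_card (U_subset_S a S η D kk _)
    | succ j ih =>
      have h1 : (U a S η D kk (i * plen S + (j+1))).card < (U a S η D kk (i * plen S + j)).card := by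
        apply Finset.card_lt_card
        refine Finset.ssubset_iff_subset_ne.mpr ⟨?_, ?_⟩
        · have : i * plen S + (j + 1) = i * plen S + j + 1 := by ring
          rw [this]; exact U_succ_subset a S η D kk _
        · have : i * plen S + (j + 1) = i * plen S + j + 1 := by ring
          rw [this]; exact hc j (Nat.lt_of_succ_le hj) 
      have := ih (Nat.le_of_succ_le hj)
      omega
  have := key (plen S) le_rfl
  unfold plen at this
  omega

lemma phase_mid_div {j : ℕ} (hj : j < plen S) (i : ℕ) : (i * plen S + j) / plen S = i := by
  rw [Nat.mul_comm, Nat.mul_add_div (plen_pos S), Nat.div_eq_of_lt hj]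
  omega

lemma phase_end_stall (i : ℕ) :
    U a S η D kk ((i + 1) * plen S) = U a S η D kk ((i + 1) * plen S - 1) := by
  obtain ⟨j0, hj0, hst⟩ := exists_stall a S η D kk i
  -- propagate the stall to the end of the phase
  have prop : ∀ j, j0 ≤ j → j < plen S →
      U a S η D kk (i * plen S + j + 1) = U a S η D kk (i * plen S + j) := by
    intro j hle hlt
    induction j with
    | zero => have : j0 = 0 := Nat.le_zero.mp hle; exact this ▸ hst
    | succ j ih =>
      rcases Nat.lt_or_ge j0 (j+1) with h'|h'
      · have hj : j < plen S := by omega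
        have hprev := ih (by omega) hj
        have hdiv : (i * plen S + j + 1) / plen S = (i * plen S + j) / plen S := by
          have e1 : i * plen S + j + 1 = i * plen S + (j+1) := by ring
          rw [e1, phase_mid_div S hlt i, phase_mid_div S hj i]
        have := stall_step a S η D kk hdiv hprev
        have e2 : i * plen S + j + 2 = i * plen S + (j + 1) + 1 := by ring
        rw [← e2]; exact this
      · have : j0 = j + 1 := le_antisymm hle h'
        subst this; exact hst
  have hfin := prop (plen S - 1) (by omega) (by have := plen_pos S; omega)
  have hmul : (i+1) * plen S = i * plen S + plen S := by ring
  have hP := plen_pos S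
  have e1 : i * plen S + (plen S - 1) + 1 = (i+1) * plen S := by omega
  have e2 : i * plen S + (plen S - 1) = (i+1) * plen S - 1 := by omega
  rw [e1, e2] at hfin; exact hfin

lemma U_burnout (hD0 : D 0 = ∅) (hR : Recurrent a S out η) :
    U a S η D kk (kk * plen S + S.card) = ∅ := by
  have key : ∀ j, (U a S η D kk (kk * plen S + j)).card + j ≤ S.card ∨
      U a S η D kk (kk * plen S + j) = ∅ := by
    intro j
    induction j with
    | zero => exact Or.inl (by simpa using Finset.card_le_card (U_subset_S a S η D kk _))
    | succ j ih =>
      rcases ih with ih|ih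
      · rcases Finset.eq_empty_or_nonempty (U a S η D kk (kk * plen S + j)) with he|hne
        · right
          have : kk * plen S + (j+1) = (kk * plen S + j) + 1 := by ring
          rw [this, U_succ, he]; rfl
        · left
          obtain ⟨x, hx, hax⟩ := hR.2 (U a S η D kk (kk * plen S + j))
            (U_subset_S a S η D kk _) hne
          have hdiv : kk ≤ (kk * plen S + j) / plen S := by
            rw [Nat.mul_comm, Nat.mul_add_div (plen_pos S)]; exact Nat.le_add_right _ _
          have hxout : x ∉ U a S η D kk ((kk * plen S + j) + 1) := by
            rw [U_succ, Finset.mem_filter]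
            rintro ⟨-, h|h⟩
            · have hz : kk - (kk * plen S + j) / plen S = 0 := Nat.sub_eq_zero_of_le hdiv
              rw [hz, hD0] at h; exact absurd h (Finset.notMem_empty x)
            · omega
          have hcard : (U a S η D kk ((kk * plen S + j) + 1)).card <
              (U a S η D kk (kk * plen S + j)).card :=
            Finset.card_lt_card (Finset.ssubset_iff_subset_ne.mpr
              ⟨U_succ_subset a S η D kk _, fun he => hxout (he ▸ hx)⟩)
          have : kk * plen S + (j+1) = (kk * plen S + j) + 1 := by ring
          rw [this]; omega
      · right
        have : kk * plen S + (j+1) = (kk * plen S + j) + 1 := by ring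
        rw [this, U_succ, ih]; rfl
  rcases key S.card with h|h
  · have : (U a S η D kk (kk * plen S + S.card)).card = 0 := by omega
    exact Finset.card_eq_zero.mp this
  · exact h

variable {a S η D kk} in
lemma tau_nonempty (out : V → Finset V) (hD0 : D 0 = ∅) (hR : Recurrent a S out η)
    (v : V) (hv : v ∈ S) : {m | v ∉ U a S η D kk m}.Nonempty := by
  refine ⟨kk * plen S + S.card, ?_⟩
  show v ∉ U a S η D kk (kk * plen S + S.card)
  rw [U_burnout a S out η D kk hD0 hR]
  exact Finset.notMem_empty v

variable {a S η D kk} in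
lemma not_mem_U_tau (out : V → Finset V) (hD0 : D 0 = ∅) (hR : Recurrent a S out η)
    (v : V) (hv : v ∈ S) : v ∉ U a S η D kk (τ a S η D kk v) :=
  Nat.sInf_mem (tau_nonempty out hD0 hR v hv)

lemma mem_U_of_lt_tau {v : V} {m : ℕ} (h : m < τ a S η D kk v) : v ∈ U a S η D kk m := by
  by_contra hc
  have : τ a S η D kk v ≤ m := Nat.sInf_le hc
  omega

variable {a S η D kk} in
lemma tau_pos (out : V → Finset V) (hD0 : D 0 = ∅) (hR : Recurrent a S out η)
    (v : V) (hv : v ∈ S) : 1 ≤ τ a S η D kk v := by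
  by_contra hc
  push_neg at hc
  have h0 : τ a S η D kk v = 0 := by omega
  have h1 := not_mem_U_tau (kk := kk) out hD0 hR v hv
  rw [h0] at h1
  have hU0 : U a S η D kk 0 = S := rfl
  rw [hU0] at h1
  exact h1 hv

variable {a S η D kk} in
lemma mem_U_iff (out : V → Finset V) (hD0 : D 0 = ∅) (hR : Recurrent a S out η)
    {v : V} (hv : v ∈ S) {m : ℕ} :
    v ∈ U a S η D kk m ↔ m < τ a S η D kk v := by
  constructor
  · intro h
    by_contra hc
    push_neg at hc
    have h2 : v ∉ U a S η D kk m := fun hm =>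
      not_mem_U_tau out hD0 hR v hv (U_anti a S η D kk hc hm)
    exact h2 h
  · exact mem_U_of_lt_tau a S η D kk

/-- the first phase index (0-based) at which `v` is unprotected -/
noncomputable def qv (D : ℕ → Finset V) (kk : ℕ) (v : V) : ℕ := sInf {q | v ∉ D (kk - q)}

variable {D kk} in
lemma qv_nonempty (hD0 : D 0 = ∅) (v : V) : {q | v ∉ D (kk - q)}.Nonempty :=
  ⟨kk, by simp [Nat.sub_self, hD0]⟩

variable {D kk} in
lemma not_mem_D_qv (hD0 : D 0 = ∅) (v : V) : v ∉ D (kk - qv D kk v) :=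
  Nat.sInf_mem (qv_nonempty hD0 v)

variable {D kk} in
lemma mem_D_of_lt_qv {v : V} {j : ℕ} (h : j < qv D kk v) : v ∈ D (kk - j) := by
  by_contra hc
  have : qv D kk v ≤ j := Nat.sInf_le hc
  omega

variable {D kk} in
lemma not_mem_D_iff (hmono : Monotone D) (hD0 : D 0 = ∅) {v : V} {j : ℕ} :
    v ∉ D (kk - j) ↔ qv D kk v ≤ j := by
  constructor
  · intro h; exact Nat.sInf_le h
  · intro h hc
    exact not_mem_D_qv hD0 v (hmono (Nat.sub_le_sub_left h kk) hc)

variable {a S out η D kk} in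
lemma burn_cond (hD0 : D 0 = ∅) (hR : Recurrent a S out η) {v : V} (hv : v ∈ S) :
    v ∉ D (kk - (τ a S η D kk v - 1) / plen S) ∧
      ∑ w ∈ U a S η D kk (τ a S η D kk v - 1), a v w ≤ η v := by
  have h1 := tau_pos (kk := kk) out hD0 hR v hv
  have h2 : v ∈ U a S η D kk (τ a S η D kk v - 1) :=
    mem_U_of_lt_tau a S η D kk (by omega)
  have h3 := not_mem_U_tau (kk := kk) out hD0 hR v hv
  have he : τ a S η D kk v = (τ a S η D kk v - 1) + 1 := by omega
  rw [he, U_succ, Finset.mem_filter] at h3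
  push_neg at h3
  have := h3 h2
  exact ⟨this.1, this.2⟩

variable {a S η D kk} in
lemma no_burn_cond {v : V} {m : ℕ} (h : v ∈ U a S η D kk (m + 1)) :
    v ∈ D (kk - m / plen S) ∨ η v < ∑ w ∈ U a S η D kk m, a v w := by
  rw [U_succ, Finset.mem_filter] at h
  exact h.2

lemma sum_U_split (v : V) (m : ℕ) :
    ∑ w ∈ S \ U a S η D kk m, a v w + ∑ w ∈ U a S η D kk m, a v w = ∑ w ∈ S, a v w :=
  Finset.sum_sdiff (U_subset_S a S η D kk m)

lemma mv_add_sum (v : V) :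
    mv a S out η D kk v + ∑ w ∈ U a S η D kk (τ a S η D kk v - 1), a v w =
      degS a S out v := by
  unfold mv degS
  rw [add_assoc, sum_U_split]

variable {S} in
lemma succ_div_plen {m : ℕ} (h : (m + 1) % plen S ≠ 0) : (m + 1) / plen S = m / plen S :=
  Nat.succ_div_of_not_dvd fun hd => h ((Nat.mod_eq_zero_of_dvd hd))

variable {a S out} in
lemma out_disj (nbrs : V → Finset V) (hout : ∀ v, out v = nbrs v \ S) {v w : V}
    (hw : w ∈ out v) : w ∉ S := by
  rw [hout v, Finset.mem_sdiff] at hw; exact hw.2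

variable {a S out η D kk} in
lemma card_Fv_phase_start (hdisj : ∀ w ∈ out (v : V), w ∉ S)
    (h : (τ a S η D kk v - 1) % plen S = 0) :
    (Fv a S out η D kk v).card = mv a S out η D kk v := by
  unfold Fv
  rw [if_pos h, Finset.card_union_of_disjoint, card_edgesTo, card_edgesTo]
  · rfl
  · rw [Finset.disjoint_left]
    intro p hp hp'
    rw [mem_edgesTo] at hp hp'
    exact hdisj p.1 hp.1 (Finset.mem_sdiff.mp hp'.1).1

variable {a S out η D kk} in
lemma card_Fv_mid {v : V} (h : (τ a S η D kk v - 1) % plen S ≠ 0) :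
    (Fv a S out η D kk v).card =
      ∑ w ∈ U a S η D kk (τ a S η D kk v - 2) \ U a S η D kk (τ a S η D kk v - 1), a v w := by
  unfold Fv
  rw [if_neg h, card_edgesTo]

variable {a S out η D kk} in
lemma degS_le_eta_add_mv (hD0 : D 0 = ∅) (hR : Recurrent a S out η) {v : V} (hv : v ∈ S) :
    degS a S out v ≤ η v + mv a S out η D kk v := by
  have h1 := (burn_cond (kk := kk) (out := out) hD0 hR hv).2
  have h2 := mv_add_sum a S out η D kk v
  omega

variable {a S out η D kk} in
lemma ell_lt_card_Fv (hD0 : D 0 = ∅) (hR : Recurrent a S out η) {v : V} (hv : v ∈ S)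
    (hdisj : ∀ w ∈ out v, w ∉ S) :
    η v + mv a S out η D kk v - degS a S out v < (Fv a S out η D kk v).card := by
  have hstab : η v < degS a S out v := hR.1 v hv
  have h2 := mv_add_sum a S out η D kk v
  have h3 := degS_le_eta_add_mv (kk := kk) hD0 hR hv
  by_cases h : (τ a S η D kk v - 1) % plen S = 0
  · rw [card_Fv_phase_start hdisj h]
    omega
  · rw [card_Fv_mid h]
    have htau1 : 1 ≤ τ a S η D kk v - 1 := by
      by_contra hc
      push_neg at hc
      apply h
      have : τ a S η D kk v - 1 = 0 := by omega
      rw [this]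
      exact Nat.zero_mod _
    -- v did not burn at step τ - 1
    have hvm : v ∈ U a S η D kk (τ a S η D kk v - 2 + 1) := by
      have : τ a S η D kk v - 2 + 1 = τ a S η D kk v - 1 := by omega
      rw [this]
      exact mem_U_of_lt_tau a S η D kk (by omega)
    have hnb := no_burn_cond hvm
    have hdiv : (τ a S η D kk v - 2 + 1) / plen S = (τ a S η D kk v - 2) / plen S := by
      apply succ_div_plen
      have : τ a S η D kk v - 2 + 1 = τ a S η D kk v - 1 := by omega
      rw [this]; exact h
    have hnb2 : η v < ∑ w ∈ U a S η D kk (τ a S η D kk v - 2), a v w := by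
      rcases hnb with hP|hs
      · exfalso
        apply (burn_cond (kk := kk) (out := out) hD0 hR hv).1
        have e : (τ a S η D kk v - 1) / plen S = (τ a S η D kk v - 2) / plen S := by
          rw [← hdiv]
          congr 1
          omega
        rw [e]
        exact hP
      · exact hs
    have hsplit : ∑ w ∈ U a S η D kk (τ a S η D kk v - 2) \ U a S η D kk (τ a S η D kk v - 1), a v w
        + ∑ w ∈ U a S η D kk (τ a S η D kk v - 1), a v w
        = ∑ w ∈ U a S η D kk (τ a S η D kk v - 2), a v w :=
      Finset.sum_sdiff (U_anti a S η D kk (by omega))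
    omega

lemma exists_rmin {α : Type*} (r : α → α → Prop) (hr : IsStrictTotalOrder α r)
    (s : Finset α) (hs : s.Nonempty) : ∃ m ∈ s, ∀ y ∈ s, y ≠ m → r m y := by
  haveI := hr
  obtain ⟨m, hm, hmin⟩ := Finset.exists_min_image s (fun x => (s.filter fun y => r y x).card) hs
  refine ⟨m, hm, fun y hy hne => ?_⟩
  rcases trichotomous_of r y m with h|h|h
  · exfalso
    have hsub : s.filter (fun z => r z y) ⊆ s.filter (fun z => r z m) := by
      intro z hz
      rw [Finset.mem_filter] at *
      exact ⟨hz.1, _root_.trans_of r hz.2 h⟩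
    have hy' : y ∈ s.filter (fun z => r z m) := Finset.mem_filter.mpr ⟨hy, h⟩
    have hy'' : y ∉ s.filter (fun z => r z y) := fun hc =>
      irrefl_of r y (Finset.mem_filter.mp hc).2
    have hlt : (s.filter fun z => r z y).card < (s.filter fun z => r z m).card :=
      Finset.card_lt_card ((Finset.ssubset_iff_of_subset hsub).mpr ⟨y, hy', hy''⟩)
    have := hmin y hy
    omega
  · exact absurd h hne
  · exact h

lemma exists_orderstat {α : Type*} (r : α → α → Prop) (hr : IsStrictTotalOrder α r) :
    ∀ (ℓ : ℕ) (s : Finset α), ℓ < s.card → ∃ x ∈ s, (s.filter fun y => r y x).card = ℓ := by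
  haveI := hr
  intro ℓ
  induction ℓ with
  | zero =>
    intro s hs
    obtain ⟨m, hm, hmin⟩ := exists_rmin r hr s (Finset.card_pos.mp hs)
    refine ⟨m, hm, ?_⟩
    rw [Finset.card_eq_zero, Finset.filter_eq_empty_iff]
    intro y hy hc
    rcases eq_or_ne y m with rfl|hne
    · exact irrefl_of r y hc
    · exact asymm_of r (hmin y hy hne) hc
  | succ ℓ ih =>
    intro s hs
    obtain ⟨m, hm, hmin⟩ := exists_rmin r hr s (by rw [← Finset.card_pos]; omega)
    obtain ⟨x, hx, hcard⟩ := ih (s.erase m) (by rw [Finset.card_erase_of_mem hm]; omega)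
    refine ⟨x, Finset.mem_of_mem_erase hx, ?_⟩
    have hxm : x ≠ m := Finset.ne_of_mem_erase hx
    have hfe : s.filter (fun y => r y x) = insert m ((s.erase m).filter (fun y => r y x)) := by
      ext z
      simp only [Finset.mem_filter, Finset.mem_insert, Finset.mem_erase]
      constructor
      · rintro ⟨hz, hrz⟩
        rcases eq_or_ne z m with rfl|hne
        · exact Or.inl rfl
        · exact Or.inr ⟨⟨hne, hz⟩, hrz⟩
      · rintro (rfl|⟨⟨hne, hz⟩, hrz⟩)
        · exact ⟨hm, hmin x (Finset.mem_of_mem_erase hx) hxm⟩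
        · exact ⟨hz, hrz⟩
    rw [hfe, Finset.card_insert_of_notMem, hcard]
    intro hc
    have := Finset.mem_of_mem_filter m hc
    exact (Finset.mem_erase.mp this).1 rfl

variable {a S out η D kk} in
lemma spec_exists (hD0 : D 0 = ∅) (hR : Recurrent a S out η)
    (prec : V → (V × ℕ) → (V × ℕ) → Prop) (hprec : ∀ v, IsStrictTotalOrder (V × ℕ) (prec v))
    (hdisj : ∀ v, ∀ w ∈ out v, w ∉ S) {v : V} (hv : v ∈ S) :
    ∃ ed ∈ Fv a S out η D kk v,
      η v + mv a S out η D kk v = degS a S out v +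
        ((Fv a S out η D kk v).filter fun f => prec v f ed).card := by
  obtain ⟨ed, hed, hc⟩ := exists_orderstat (prec v) (hprec v)
    (η v + mv a S out η D kk v - degS a S out v) (Fv a S out η D kk v)
    (ell_lt_card_Fv hD0 hR hv (hdisj v))
  refine ⟨ed, hed, ?_⟩
  have := degS_le_eta_add_mv (kk := kk) hD0 hR hv
  omega

variable {a S out η D kk} in
lemma Fv_target {v : V} {ed : V × ℕ} (hed : ed ∈ Fv a S out η D kk v) :
    ed.2 < a v ed.1 ∧ (ed.1 ∈ S ∨ ed.1 ∈ out v) := by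
  unfold Fv at hed
  by_cases h : (τ a S η D kk v - 1) % plen S = 0
  · rw [if_pos h, Finset.mem_union] at hed
    rcases hed with hed|hed
    · rw [mem_edgesTo] at hed
      exact ⟨hed.2, Or.inr hed.1⟩
    · rw [mem_edgesTo] at hed
      exact ⟨hed.2, Or.inl (Finset.mem_sdiff.mp hed.1).1⟩
  · rw [if_neg h, mem_edgesTo] at hed
    exact ⟨hed.2, Or.inl (U_subset_S a S η D kk _ (Finset.mem_sdiff.mp hed.1).1)⟩

variable {a S out η D kk} in
lemma Fv_parent_lt (hD0 : D 0 = ∅) (hR : Recurrent a S out η)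
    (hdisj : ∀ v, ∀ w ∈ out v, w ∉ S) {v : V} (hv : v ∈ S) {ed : V × ℕ}
    (hed : ed ∈ Fv a S out η D kk v) (hs : ed.1 ∈ S) :
    τ a S η D kk ed.1 < τ a S η D kk v := by
  have htp := tau_pos (kk := kk) out hD0 hR v hv
  have key : ed.1 ∉ U a S η D kk (τ a S η D kk v - 1) := by
    unfold Fv at hed
    by_cases h : (τ a S η D kk v - 1) % plen S = 0
    · rw [if_pos h, Finset.mem_union] at hed
      rcases hed with hed|hed
      · rw [mem_edgesTo] at hed
        exact absurd hs (hdisj v ed.1 hed.1)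
      · rw [mem_edgesTo] at hed
        exact (Finset.mem_sdiff.mp hed.1).2
    · rw [if_neg h, mem_edgesTo] at hed
      exact (Finset.mem_sdiff.mp hed.1).2
  have : ¬ (τ a S η D kk v - 1 < τ a S η D kk ed.1) := by
    intro hc
    exact key (mem_U_of_lt_tau a S η D kk hc)
  omega

variable {a S out η D kk} in
lemma qv_le_div (hmono : Monotone D) (hD0 : D 0 = ∅) (hR : Recurrent a S out η)
    {v : V} (hv : v ∈ S) :
    qv D kk v ≤ (τ a S η D kk v - 1) / plen S :=
  (not_mem_D_iff hmono hD0).mp (burn_cond (kk := kk) (out := out) hD0 hR hv).1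

variable {a S out η D kk} in
lemma tau_formula (hmono : Monotone D) (hD0 : D 0 = ∅) (hR : Recurrent a S out η)
    (hdisj : ∀ v, ∀ w ∈ out v, w ∉ S) {v : V} (hv : v ∈ S) {ed : V × ℕ}
    (hed : ed ∈ Fv a S out η D kk v) :
    τ a S η D kk v =
      max ((if ed.1 ∈ S then τ a S η D kk ed.1 else 0) + 1) (qv D kk v * plen S + 1) := by
  have htp := tau_pos (kk := kk) out hD0 hR v hv
  have hqle := qv_le_div (kk := kk) hmono hD0 hR hv
  have hsle : qv D kk v * plen S ≤ τ a S η D kk v - 1 := by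
    calc qv D kk v * plen S ≤ ((τ a S η D kk v - 1) / plen S) * plen S :=
          Nat.mul_le_mul_right _ hqle
      _ ≤ τ a S η D kk v - 1 := Nat.div_mul_le_self _ _
  by_cases h : (τ a S η D kk v - 1) % plen S = 0
  · -- phase start
    have hqe : qv D kk v * plen S = τ a S η D kk v - 1 := by
      rcases Nat.lt_or_ge (τ a S η D kk v) 2 with h2|h2
      · -- τ = 1
        have ht1 : τ a S η D kk v - 1 = 0 := by omega
        rw [ht1, Nat.zero_div] at hqle
        have hq0 : qv D kk v = 0 := by omega
        rw [hq0, ht1]; omega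
      · set c := (τ a S η D kk v - 1) / plen S with hc
        clear_value c
        have hdvd : c * plen S = τ a S η D kk v - 1 := by
          rw [hc, Nat.div_mul_cancel (Nat.dvd_of_mod_eq_zero h)]
        have hc1 : 1 ≤ c := by
          rcases Nat.eq_zero_or_pos c with h0|h0
          · rw [h0] at hdvd; omega
          · exact h0
        obtain ⟨c', rfl⟩ : ∃ c', c = c' + 1 := ⟨c - 1, by omega⟩
        have hmul : (c' + 1) * plen S = c' * plen S + plen S := by ring
        have hstall := phase_end_stall a S η D kk c'
        have hP := plen_pos S
        have hm1 : (c' + 1) * plen S - 1 = c' * plen S + (plen S - 1) := by omega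
        -- v ∈ U (τ - 1) = U ((c'+1) * plen S)
        have hvU : v ∈ U a S η D kk ((c' + 1) * plen S) := by
          rw [hdvd]
          exact mem_U_of_lt_tau a S η D kk (by omega)
        have hdiv2 : ((c' + 1) * plen S - 1) / plen S = c' := by
          rw [hm1, Nat.mul_comm, Nat.mul_add_div hP, Nat.div_eq_of_lt (by omega)]
          omega
        have hsum : ∑ w ∈ U a S η D kk ((c' + 1) * plen S - 1), a v w ≤ η v := by
          rw [hstall.symm, hdvd]
          exact (burn_cond (kk := kk) (out := out) hD0 hR hv).2
        have hvU' : v ∈ U a S η D kk (((c' + 1) * plen S - 1) + 1) := by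
          have : ((c' + 1) * plen S - 1) + 1 = (c' + 1) * plen S := by omega
          rw [this]; exact hvU
        rcases no_burn_cond hvU' with hD|hlt
        · rw [hdiv2] at hD
          have : c' < qv D kk v := by
            by_contra hc'
            push_neg at hc'
            exact (not_mem_D_iff hmono hD0).mpr hc' hD
          have hq2 : qv D kk v = c' + 1 := by omega
          rw [hq2, hdvd]
        · omega
    -- parent burnt weakly earlier
    have hpar : (if ed.1 ∈ S then τ a S η D kk ed.1 else 0) ≤ τ a S η D kk v - 1 := by
      by_cases hs : ed.1 ∈ S
      · rw [if_pos hs]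
        unfold Fv at hed
        rw [if_pos h, Finset.mem_union] at hed
        rcases hed with hed|hed
        · rw [mem_edgesTo] at hed
          exact absurd hs (hdisj v ed.1 hed.1)
        · rw [mem_edgesTo] at hed
          have := (Finset.mem_sdiff.mp hed.1).2
          have h2 : ¬ (τ a S η D kk v - 1 < τ a S η D kk ed.1) := fun hc =>
            this (mem_U_of_lt_tau a S η D kk hc)
          omega
      · rw [if_neg hs]; omega
    omega
  · -- mid phase
    have htau2 : 1 ≤ τ a S η D kk v - 1 := by
      by_contra hc
      push_neg at hc
      have : τ a S η D kk v - 1 = 0 := by omega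
      rw [this] at h
      exact h (Nat.zero_mod _)
    unfold Fv at hed
    rw [if_neg h, mem_edgesTo] at hed
    obtain ⟨hm, hlt⟩ := hed
    rw [Finset.mem_sdiff] at hm
    have hsmem : ed.1 ∈ S := U_subset_S a S η D kk _ hm.1
    rw [if_pos hsmem]
    have h1 : τ a S η D kk v - 2 < τ a S η D kk ed.1 :=
      (mem_U_iff (kk := kk) out hD0 hR hsmem).mp hm.1
    have h2 : ¬ (τ a S η D kk v - 1 < τ a S η D kk ed.1) := fun hc =>
      hm.2 (mem_U_of_lt_tau a S η D kk hc)
    omega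

variable {a S out D kk} in
lemma injectivity (hmono : Monotone D) (hD0 : D 0 = ∅)
    {η₁ η₂ : V → ℕ} {e : V → Option (V × ℕ)}
    (hR1 : Recurrent a S out η₁) (hR2 : Recurrent a S out η₂)
    (prec : V → (V × ℕ) → (V × ℕ) → Prop)
    (hS1 : Spec a S out η₁ D kk prec e) (hS2 : Spec a S out η₂ D kk prec e)
    (hdisj : ∀ v, ∀ w ∈ out v, w ∉ S) :
    ∀ v ∈ S, η₁ v = η₂ v := by
  have tau_eq : ∀ n, ∀ v ∈ S, τ a S η₁ D kk v = n →
      τ a S η₁ D kk v = τ a S η₂ D kk v := by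
    intro n
    induction n using Nat.strong_induction_on with
    | _ n ih =>
      intro v hv hn
      obtain ⟨ed₁, he1, hf1, -⟩ := hS1.2 v hv
      obtain ⟨ed₂, he2, hf2, -⟩ := hS2.2 v hv
      have hee : ed₁ = ed₂ := by
        rw [he1] at he2
        exact Option.some.inj he2
      have t1 := tau_formula hmono hD0 hR1 hdisj hv hf1
      have t2 := tau_formula hmono hD0 hR2 hdisj hv hf2
      rw [← hee] at t2
      by_cases hs : ed₁.1 ∈ S
      · rw [if_pos hs] at t1 t2
        have hlt : τ a S η₁ D kk ed₁.1 < n := by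
          have := Fv_parent_lt hD0 hR1 hdisj hv hf1 hs
          omega
        have heq := ih _ hlt ed₁.1 hs rfl
        rw [t1, t2, heq]
      · rw [if_neg hs] at t1 t2
        rw [t1, t2]
  have tau_eq' : ∀ v ∈ S, τ a S η₁ D kk v = τ a S η₂ D kk v := fun v hv =>
    tau_eq _ v hv rfl
  have U_eq : ∀ m, U a S η₁ D kk m = U a S η₂ D kk m := by
    intro m
    ext w
    constructor
    · intro hw
      have hwS := U_subset_S a S η₁ D kk m hw
      have := (mem_U_iff (kk := kk) out hD0 hR1 hwS).mp hw
      exact (mem_U_iff (kk := kk) out hD0 hR2 hwS).mpr (by rw [← tau_eq' w hwS]; exact this)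
    · intro hw
      have hwS := U_subset_S a S η₂ D kk m hw
      have := (mem_U_iff (kk := kk) out hD0 hR2 hwS).mp hw
      exact (mem_U_iff (kk := kk) out hD0 hR1 hwS).mpr (by rw [tau_eq' w hwS]; exact this)
  have hUf : U a S η₁ D kk = U a S η₂ D kk := funext U_eq
  intro v hv
  have hFv : Fv a S out η₁ D kk v = Fv a S out η₂ D kk v := by
    unfold Fv
    rw [hUf, tau_eq' v hv]
  have hmv : mv a S out η₁ D kk v = mv a S out η₂ D kk v := by
    unfold mv
    rw [hUf, tau_eq' v hv]
  obtain ⟨ed₁, he1, hf1, heq1⟩ := hS1.2 v hv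
  obtain ⟨ed₂, he2, hf2, heq2⟩ := hS2.2 v hv
  have hee : ed₁ = ed₂ := by
    rw [he1] at he2
    exact Option.some.inj he2
  rw [hee, hFv, hmv] at heq1
  omega

variable {a S out η D kk} in
lemma forward (hD0 : D 0 = ∅) (hR : Recurrent a S out η)
    (prec : V → (V × ℕ) → (V × ℕ) → Prop)
    (hprec : ∀ v, IsStrictTotalOrder (V × ℕ) (prec v))
    (hdisj : ∀ v, ∀ w ∈ out v, w ∉ S) :
    ∃ e, Spec a S out η D kk prec e ∧ IsSpanningTree a S out e := by
  classical
  have hch : ∀ v : V, v ∈ S → ∃ ed, ed ∈ Fv a S out η D kk v ∧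
      η v + mv a S out η D kk v = degS a S out v +
        ((Fv a S out η D kk v).filter fun f => prec v f ed).card := by
    intro v hv
    obtain ⟨ed, h1, h2⟩ := spec_exists hD0 hR prec hprec hdisj hv
    exact ⟨ed, h1, h2⟩
  choose f hf1 hf2 using hch
  refine ⟨fun v => if h : v ∈ S then some (f v h) else none, ⟨?_, ?_⟩, ?_, ?_, ?_⟩
  · intro v hv
    exact dif_neg hv
  · intro v hv
    exact ⟨f v hv, dif_pos hv, hf1 v hv, hf2 v hv⟩
  · intro v hv
    exact dif_neg hv
  · intro v hv
    refine ⟨(f v hv).1, (f v hv).2, ?_, ?_, ?_⟩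
    · show (if h : v ∈ S then some (f v h) else none) = _
      rw [dif_pos hv]
    · exact (Fv_target (hf1 v hv)).1
    · exact (Fv_target (hf1 v hv)).2
  · intro v hv
    set e : V → Option (V × ℕ) := fun v => if h : v ∈ S then some (f v h) else none with he
    have key : ∀ n, ∀ v, (hv : v ∈ S) → τ a S η D kk v ≤ n →
        ∃ m, iterP (par S e) m v = none := by
      intro n
      induction n using Nat.strong_induction_on with
      | _ n ih =>
        intro v hv hτ
        by_cases hs : (f v hv).1 ∈ S
        · have hlt := Fv_parent_lt hD0 hR hdisj hv (hf1 v hv) hs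
          obtain ⟨m, hm⟩ := ih (τ a S η D kk v - 1)
            (by have := tau_pos (kk := kk) out hD0 hR v hv; omega)
            (f v hv).1 hs (by omega)
          refine ⟨m + 1, ?_⟩
          have hpar : par S e v = some (f v hv).1 := by
            unfold par
            rw [he]
            simp [dif_pos hv, hs]
          show (par S e v).bind (iterP (par S e) m) = none
          rw [hpar]
          exact hm
        · refine ⟨1, ?_⟩
          have hpar : par S e v = none := by
            unfold par
            rw [he]
            simp [dif_pos hv, hs]
          show (par S e v).bind (iterP (par S e) 0) = none
          rw [hpar]
          rfl
    exact key (τ a S η D kk v) v hv le_rfl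

/-! ### Surjectivity: reconstructing the configuration from a spanning tree -/

noncomputable def dpt (e : V → Option (V × ℕ)) (v : V) : ℕ :=
  sInf {m | iterP (par S e) m v = none}

noncomputable def sigAux (e : V → Option (V × ℕ)) : ℕ → V → ℕ
  | 0, _v => 0
  | n + 1, v =>
    match par S e v with
    | none => qv D kk v * plen S + 1
    | some w => max (sigAux e n w + 1) (qv D kk v * plen S + 1)

/-- the burning time determined by the tree `e` -/
noncomputable def sig (e : V → Option (V × ℕ)) (v : V) : ℕ :=
  sigAux S D kk e (dpt S e v) v

variable {S} in
lemma par_mem {e : V → Option (V × ℕ)} {v w : V} (h : par S e v = some w) : w ∈ S := by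
  unfold par at h
  cases he : e v with
  | none => rw [he] at h; exact absurd h (by simp)
  | some p =>
    rw [he] at h
    by_cases hp : p.1 ∈ S
    · simp only [Option.bind_some, if_pos hp] at h
      rw [← Option.some.inj h]
      exact hp
    · simp only [Option.bind_some, if_neg hp] at h
      exact absurd h (by simp)

variable {a S out} in
lemma dpt_nonempty {e : V → Option (V × ℕ)} (hT : IsSpanningTree a S out e) (v : V) :
    {m | iterP (par S e) m v = none}.Nonempty := by
  by_cases hv : v ∈ S
  · exact hT.2.2 v hv
  · refine ⟨1, ?_⟩
    show (par S e v).bind (iterP (par S e) 0) = none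
    unfold par
    rw [hT.1 v hv]
    rfl

variable {a S out} in
lemma iterP_dpt {e : V → Option (V × ℕ)} (hT : IsSpanningTree a S out e) (v : V) :
    iterP (par S e) (dpt S e v) v = none :=
  Nat.sInf_mem (dpt_nonempty hT v)

variable {a S out} in
lemma dpt_pos {e : V → Option (V × ℕ)} (hT : IsSpanningTree a S out e) (v : V) :
    1 ≤ dpt S e v := by
  by_contra hc
  push_neg at hc
  have h0 : dpt S e v = 0 := by omega
  have := iterP_dpt hT v
  rw [h0] at this
  exact Option.some_ne_none v this

variable {a S out} in
lemma dpt_par {e : V → Option (V × ℕ)} (hT : IsSpanningTree a S out e) {v w : V}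
    (h : par S e v = some w) : dpt S e w < dpt S e v := by
  have h1 := dpt_pos hT v
  have h2 := iterP_dpt hT v
  have he : dpt S e v = (dpt S e v - 1) + 1 := by omega
  rw [he] at h2
  have h3 : iterP (par S e) (dpt S e v - 1) w = none := by
    have : iterP (par S e) (dpt S e v - 1 + 1) v
        = (par S e v).bind (iterP (par S e) (dpt S e v - 1)) := rfl
    rw [this, h] at h2
    exact h2
  have h4 : dpt S e w ≤ dpt S e v - 1 :=
    Nat.sInf_le (show (dpt S e v - 1) ∈ {m | iterP (par S e) m w = none} from h3)
  omega

variable {a S out D kk} in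
lemma sigAux_stable {e : V → Option (V × ℕ)} (hT : IsSpanningTree a S out e) :
    ∀ N v n m, dpt S e v ≤ N → dpt S e v ≤ n → dpt S e v ≤ m →
      sigAux S D kk e n v = sigAux S D kk e m v := by
  intro N
  induction N using Nat.strong_induction_on with
  | _ N ih =>
    intro v n m hN hn hm
    have hd1 := dpt_pos hT v
    obtain ⟨n', rfl⟩ : ∃ n', n = n' + 1 := ⟨n - 1, by omega⟩
    obtain ⟨m', rfl⟩ : ∃ m', m = m' + 1 := ⟨m - 1, by omega⟩
    cases hpar : par S e v with
    | none =>
      show sigAux S D kk e (n' + 1) v = sigAux S D kk e (m' + 1) v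
      unfold sigAux
      rw [hpar]
    | some w =>
      have hdw := dpt_par hT hpar
      have hdw1 := dpt_pos hT w
      have hrec := ih (N - 1) (by omega) w n' m' (by omega) (by omega) (by omega)
      show sigAux S D kk e (n' + 1) v = sigAux S D kk e (m' + 1) v
      unfold sigAux
      rw [hpar]
      show max (sigAux S D kk e n' w + 1) (qv D kk v * plen S + 1)
        = max (sigAux S D kk e m' w + 1) (qv D kk v * plen S + 1)
      rw [hrec]

variable {a S out D kk} in
lemma sig_none {e : V → Option (V × ℕ)} (hT : IsSpanningTree a S out e) {v : V}
    (h : par S e v = none) : sig S D kk e v = qv D kk v * plen S + 1 := by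
  have h1 := dpt_pos hT v
  obtain ⟨n', hn⟩ : ∃ n', dpt S e v = n' + 1 := ⟨dpt S e v - 1, by omega⟩
  unfold sig
  rw [hn]
  unfold sigAux
  rw [h]

variable {a S out D kk} in
lemma sig_some {e : V → Option (V × ℕ)} (hT : IsSpanningTree a S out e) {v w : V}
    (h : par S e v = some w) :
    sig S D kk e v = max (sig S D kk e w + 1) (qv D kk v * plen S + 1) := by
  have h1 := dpt_pos hT v
  have hdw := dpt_par hT h
  obtain ⟨n', hn⟩ : ∃ n', dpt S e v = n' + 1 := ⟨dpt S e v - 1, by omega⟩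
  have hv1 : sig S D kk e v = sigAux S D kk e (n' + 1) v := by
    unfold sig
    rw [hn]
  rw [hv1]
  unfold sigAux
  rw [h]
  have hst : sigAux S D kk e n' w = sig S D kk e w :=
    sigAux_stable (D := D) (kk := kk) hT (dpt S e w) w n' (dpt S e w) le_rfl
      (by omega) le_rfl
  show max (sigAux S D kk e n' w + 1) (qv D kk v * plen S + 1) = _
  rw [hst]

variable {a S out D kk} in
lemma sig_ge {e : V → Option (V × ℕ)} (hT : IsSpanningTree a S out e) (v : V) :
    qv D kk v * plen S + 1 ≤ sig S D kk e v := by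
  cases hpar : par S e v with
  | none => rw [sig_none hT hpar]
  | some w => rw [sig_some hT hpar]; omega

variable {a S out D kk} in
lemma sig_pos {e : V → Option (V × ℕ)} (hT : IsSpanningTree a S out e) (v : V) :
    1 ≤ sig S D kk e v := by
  have := sig_ge (D := D) (kk := kk) hT v
  omega

variable {S D kk} in
lemma window_of_chain {e : V → Option (V × ℕ)} {v : V}
    (hch : ∀ t, ((sig S D kk e v - 1) / plen S) * plen S < t → t ≤ sig S D kk e v →
      ∃ u ∈ S, sig S D kk e u = t) :
    sig S D kk e v ≤ ((sig S D kk e v - 1) / plen S) * plen S + S.card := by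
  set q := (sig S D kk e v - 1) / plen S with hq
  have hmap : ∀ t ∈ Finset.Ioc (q * plen S) (sig S D kk e v), ∃ u ∈ S, sig S D kk e u = t := by
    intro t' ht'
    rw [Finset.mem_Ioc] at ht'
    exact hch t' ht'.1 ht'.2
  choose g hg1 hg2 using hmap
  have hcard := Finset.card_le_card_of_injOn
    (s := Finset.Ioc (q * plen S) (sig S D kk e v)) (t := S)
    (fun t => if h : t ∈ Finset.Ioc (q * plen S) (sig S D kk e v) then g t h else v)
    ?_ ?_
  · rw [Nat.card_Ioc] at hcard
    omega
  · intro x hx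
    simp only [dif_pos hx]
    exact Finset.mem_coe.mpr (by rw [dif_pos (show x ∈ Finset.Ioc (q * plen S) (sig S D kk e v) from hx)]; exact hg1 x hx)
  · intro x hx y hy hxy
    rw [Finset.mem_coe] at hx hy
    simp only [dif_pos hx, dif_pos hy] at hxy
    have e1 := hg2 x hx
    have e2 := hg2 y hy
    rw [hxy] at e1
    rw [e2] at e1
    exact e1.symm

variable {a S out D kk} in
lemma sig_chain {e : V → Option (V × ℕ)} (hT : IsSpanningTree a S out e) :
    ∀ N v, v ∈ S → dpt S e v ≤ N →
      ∀ t, ((sig S D kk e v - 1) / plen S) * plen S < t → t ≤ sig S D kk e v →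
        ∃ u ∈ S, sig S D kk e u = t := by
  intro N
  induction N using Nat.strong_induction_on with
  | _ N ih =>
    intro v hv hN t ht1 ht2
    have hPpos := plen_pos S
    by_cases hc : sig S D kk e v = qv D kk v * plen S + 1
    · have hdiv : (sig S D kk e v - 1) / plen S = qv D kk v := by
        rw [hc, Nat.add_sub_cancel, Nat.mul_div_cancel _ hPpos]
      rw [hdiv] at ht1
      rw [hc] at ht2
      exact ⟨v, hv, by rw [hc]; omega⟩
    · obtain ⟨w, hpar⟩ : ∃ w, par S e v = some w := by
        cases hp : par S e v with
        | none => exact absurd (sig_none (D := D) (kk := kk) hT hp) hc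
        | some w => exact ⟨w, rfl⟩
      have hwS := par_mem hpar
      have hsv := sig_some (D := D) (kk := kk) hT hpar
      have hson : sig S D kk e v = sig S D kk e w + 1 := by
        rcases max_choice (sig S D kk e w + 1) (qv D kk v * plen S + 1) with h|h
        · rw [hsv, h]
        · exact absurd (by rw [hsv, h]) hc
      have hdlt := dpt_par hT hpar
      have hchainw := ih (N - 1) (by omega) w hwS (by omega)
      set q := (sig S D kk e w - 1) / plen S with hq
      have hb1 : q * plen S < sig S D kk e w := by
        have h1 := sig_pos (D := D) (kk := kk) hT w
        have h2 := Nat.div_mul_le_self (sig S D kk e w - 1) (plen S)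
        rw [← hq] at h2
        omega
      have hb2 := window_of_chain (D := D) (kk := kk) hchainw
      rw [← hq] at hb2
      have hSP : S.card < plen S := by unfold plen; omega
      have hrlt : sig S D kk e w - q * plen S < plen S := by omega
      have hdivw : sig S D kk e w / plen S = q := by
        have hrw : sig S D kk e w = (sig S D kk e w - q * plen S) + q * plen S := by omega
        rw [hrw, Nat.add_mul_div_right _ _ hPpos, Nat.div_eq_of_lt hrlt]
        omega
      have hdv : (sig S D kk e v - 1) / plen S = q := by
        rw [hson, Nat.add_sub_cancel]
        exact hdivw
      rw [hdv] at ht1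
      rcases eq_or_ne t (sig S D kk e v) with rfl|hne
      · exact ⟨v, hv, rfl⟩
      · exact hchainw t ht1 (by omega)

variable {a S out D kk} in
lemma sig_window {e : V → Option (V × ℕ)} (hT : IsSpanningTree a S out e) {v : V}
    (hv : v ∈ S) :
    ((sig S D kk e v - 1) / plen S) * plen S < sig S D kk e v ∧
      sig S D kk e v ≤ ((sig S D kk e v - 1) / plen S) * plen S + S.card := by
  have h1 := sig_pos (D := D) (kk := kk) hT v
  have h2 := Nat.div_mul_le_self (sig S D kk e v - 1) (plen S)
  refine ⟨by omega, window_of_chain (sig_chain hT (dpt S e v) v hv le_rfl)⟩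

variable {a S out D kk} in
lemma sig_div_mod {e : V → Option (V × ℕ)} (hT : IsSpanningTree a S out e) {v : V}
    (hv : v ∈ S) :
    sig S D kk e v / plen S = (sig S D kk e v - 1) / plen S ∧
      sig S D kk e v % plen S ≠ 0 := by
  have hPpos := plen_pos S
  obtain ⟨h1, h2⟩ := sig_window (D := D) (kk := kk) hT hv
  set q := (sig S D kk e v - 1) / plen S with hq
  have hSP : S.card < plen S := by unfold plen; omega
  have hrlt : sig S D kk e v - q * plen S < plen S := by omega
  have hrw : sig S D kk e v = (sig S D kk e v - q * plen S) + q * plen S := by omega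
  constructor
  · rw [hrw, Nat.add_mul_div_right _ _ hPpos, Nat.div_eq_of_lt hrlt]
    omega
  · rw [hrw, Nat.add_mul_mod_self_right, Nat.mod_eq_of_lt hrlt]
    omega

variable {a S out D kk} in
lemma mid_classify {e : V → Option (V × ℕ)} (hT : IsSpanningTree a S out e) {v : V}
    (hm : (sig S D kk e v - 1) % plen S ≠ 0) :
    ∃ w, par S e v = some w ∧ sig S D kk e v = sig S D kk e w + 1 := by
  cases hpar : par S e v with
  | none =>
    exfalso
    apply hm
    rw [sig_none (D := D) (kk := kk) hT hpar, Nat.add_sub_cancel, Nat.mul_mod_left]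
  | some w =>
    refine ⟨w, rfl, ?_⟩
    rcases max_choice (sig S D kk e w + 1) (qv D kk v * plen S + 1) with h|h
    · rw [sig_some (D := D) (kk := kk) hT hpar, h]
    · exfalso
      apply hm
      rw [sig_some (D := D) (kk := kk) hT hpar, h, Nat.add_sub_cancel, Nat.mul_mod_left]

variable {a S out D kk} in
lemma start_classify {e : V → Option (V × ℕ)} (hT : IsSpanningTree a S out e) {v : V}
    (hm : (sig S D kk e v - 1) % plen S = 0) :
    sig S D kk e v = qv D kk v * plen S + 1 := by
  by_contra hc
  obtain ⟨w, hpar, hson⟩ : ∃ w, par S e v = some w ∧ sig S D kk e v = sig S D kk e w + 1 := by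
    cases hpar : par S e v with
    | none => exact absurd (sig_none (D := D) (kk := kk) hT hpar) hc
    | some w =>
      refine ⟨w, rfl, ?_⟩
      rcases max_choice (sig S D kk e w + 1) (qv D kk v * plen S + 1) with h|h
      · rw [sig_some (D := D) (kk := kk) hT hpar, h]
      · exact absurd (by rw [sig_some (D := D) (kk := kk) hT hpar, h]) hc
  have hwS := par_mem hpar
  apply (sig_div_mod (D := D) (kk := kk) hT hwS).2
  have hw : sig S D kk e w = sig S D kk e v - 1 := by omega
  rw [hw]
  exact hm

/-- unburnt sets of the schedule determined by the tree -/
noncomputable def Up (e : V → Option (V × ℕ)) (m : ℕ) : Finset V :=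
  S.filter fun u => m < sig S D kk e u

noncomputable def mvp (e : V → Option (V × ℕ)) (v : V) : ℕ :=
  sk a out v + ∑ w ∈ S \ Up S D kk e (sig S D kk e v - 1), a v w

noncomputable def Fvp (e : V → Option (V × ℕ)) (v : V) : Finset (V × ℕ) :=
  if (sig S D kk e v - 1) % plen S = 0 then
    edgesTo a v (out v) ∪ edgesTo a v (S \ Up S D kk e (sig S D kk e v - 1))
  else
    edgesTo a v (Up S D kk e (sig S D kk e v - 2) \ Up S D kk e (sig S D kk e v - 1))

noncomputable def ellp (prec : V → (V × ℕ) → (V × ℕ) → Prop)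
    (e : V → Option (V × ℕ)) (v : V) : ℕ :=
  ((Fvp a S out D kk e v).filter fun f => prec v f ((e v).getD (v, 0))).card

noncomputable def etaOf (prec : V → (V × ℕ) → (V × ℕ) → Prop)
    (e : V → Option (V × ℕ)) (v : V) : ℕ :=
  degS a S out v + ellp a S out D kk prec e v - mvp a S out D kk e v

variable {S D kk} in
lemma mem_Up {e : V → Option (V × ℕ)} {u : V} {m : ℕ} :
    u ∈ Up S D kk e m ↔ u ∈ S ∧ m < sig S D kk e u := by
  unfold Up
  exact Finset.mem_filter

lemma Up_subset (e : V → Option (V × ℕ)) (m : ℕ) : Up S D kk e m ⊆ S :=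
  Finset.filter_subset _ _

variable {S D kk} in
lemma Up_anti (e : V → Option (V × ℕ)) {m n : ℕ} (h : m ≤ n) :
    Up S D kk e n ⊆ Up S D kk e m := by
  intro u hu
  rw [mem_Up] at hu ⊢
  exact ⟨hu.1, by omega⟩

lemma mvp_add (e : V → Option (V × ℕ)) (v : V) :
    mvp a S out D kk e v + ∑ w ∈ Up S D kk e (sig S D kk e v - 1), a v w =
      degS a S out v := by
  unfold mvp degS
  rw [add_assoc, Finset.sum_sdiff (Up_subset S D kk e _)]

variable {a S out D kk} in
lemma pe_eq {e : V → Option (V × ℕ)} (hT : IsSpanningTree a S out e) {v : V} (hv : v ∈ S) :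
    e v = some ((e v).getD (v, 0)) := by
  obtain ⟨w, i, hei, -, -⟩ := hT.2.1 v hv
  rw [hei]
  rfl

variable {a S out D kk} in
lemma pe_mem_Fvp {e : V → Option (V × ℕ)} (hT : IsSpanningTree a S out e) {v : V}
    (hv : v ∈ S) : (e v).getD (v, 0) ∈ Fvp a S out D kk e v := by
  obtain ⟨w, i, hei, hia, hws⟩ := hT.2.1 v hv
  have hpe : (e v).getD (v, 0) = (w, i) := by rw [hei]; rfl
  rw [hpe]
  unfold Fvp
  by_cases hm : (sig S D kk e v - 1) % plen S = 0
  · rw [if_pos hm, Finset.mem_union]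
    rcases hws with hws|hwo
    · right
      rw [mem_edgesTo]
      dsimp only
      refine ⟨?_, hia⟩
      have hpar : par S e v = some w := by
        unfold par
        rw [hei]
        simp [hws]
      have hσ := sig_some (D := D) (kk := kk) hT hpar
      have h1 := sig_pos (D := D) (kk := kk) hT v
      rw [Finset.mem_sdiff]
      refine ⟨hws, fun hc => ?_⟩
      rw [mem_Up] at hc
      have : sig S D kk e w + 1 ≤ sig S D kk e v := by rw [hσ]; omega
      omega
    · left
      rw [mem_edgesTo]
      dsimp only
      exact ⟨hwo, hia⟩
  · rw [if_neg hm, mem_edgesTo]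
    dsimp only
    obtain ⟨w', hpar, hson⟩ := mid_classify (D := D) (kk := kk) hT hm
    have hw'S := par_mem hpar
    have hww : w' = w := by
      unfold par at hpar
      rw [hei] at hpar
      by_cases hws' : w ∈ S
      · simp only [Option.bind_some, if_pos hws'] at hpar
        exact (Option.some.inj hpar).symm
      · simp only [Option.bind_some, if_neg hws'] at hpar
        exact absurd hpar (by simp)
    subst hww
    have h1 := sig_pos (D := D) (kk := kk) hT w'
    refine ⟨Finset.mem_sdiff.mpr ⟨mem_Up.mpr ⟨hw'S, by omega⟩, fun hc => ?_⟩, hia⟩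
    rw [mem_Up] at hc
    omega

variable {a S out D kk} in
lemma card_Fvp_start {e : V → Option (V × ℕ)} {v : V} (hdisj : ∀ w ∈ out v, w ∉ S)
    (hm : (sig S D kk e v - 1) % plen S = 0) :
    (Fvp a S out D kk e v).card = mvp a S out D kk e v := by
  unfold Fvp
  rw [if_pos hm, Finset.card_union_of_disjoint, card_edgesTo, card_edgesTo]
  · rfl
  · rw [Finset.disjoint_left]
    intro p hp hp'
    rw [mem_edgesTo] at hp hp'
    exact hdisj p.1 hp.1 (Finset.mem_sdiff.mp hp'.1).1

variable {a S out D kk} in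
lemma card_Fvp_mid {e : V → Option (V × ℕ)} {v : V}
    (hm : (sig S D kk e v - 1) % plen S ≠ 0) :
    (Fvp a S out D kk e v).card =
      ∑ w ∈ Up S D kk e (sig S D kk e v - 2) \ Up S D kk e (sig S D kk e v - 1), a v w := by
  unfold Fvp
  rw [if_neg hm, card_edgesTo]

variable {a S out D kk} in
lemma ellp_lt_card (prec : V → (V × ℕ) → (V × ℕ) → Prop)
    (hprec : ∀ v, IsStrictTotalOrder (V × ℕ) (prec v))
    {e : V → Option (V × ℕ)} (hT : IsSpanningTree a S out e) {v : V} (hv : v ∈ S) :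
    ellp a S out D kk prec e v < (Fvp a S out D kk e v).card := by
  haveI := hprec v
  have hpe := pe_mem_Fvp (D := D) (kk := kk) hT hv
  unfold ellp
  have hsub : (Fvp a S out D kk e v).filter (fun f => prec v f ((e v).getD (v, 0))) ⊆
      (Fvp a S out D kk e v).erase ((e v).getD (v, 0)) := by
    intro f hf
    rw [Finset.mem_filter] at hf
    rw [Finset.mem_erase]
    exact ⟨fun he => irrefl_of (prec v) _ (he ▸ hf.2), hf.1⟩
  have h1 := Finset.card_le_card hsub
  have h2 := Finset.card_erase_of_mem hpe
  have h3 : 0 < (Fvp a S out D kk e v).card := Finset.card_pos.mpr ⟨_, hpe⟩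
  omega

variable {a S out D kk} in
lemma ellp_lt_mvp (prec : V → (V × ℕ) → (V × ℕ) → Prop)
    (hprec : ∀ v, IsStrictTotalOrder (V × ℕ) (prec v))
    (hdisj : ∀ v, ∀ w ∈ out v, w ∉ S)
    {e : V → Option (V × ℕ)} (hT : IsSpanningTree a S out e) {v : V} (hv : v ∈ S) :
    ellp a S out D kk prec e v < mvp a S out D kk e v := by
  have h := ellp_lt_card (D := D) (kk := kk) prec hprec hT hv
  by_cases hm : (sig S D kk e v - 1) % plen S = 0
  · rw [card_Fvp_start (hdisj v) hm] at h
    exact h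
  · rw [card_Fvp_mid hm] at h
    have hsub : Up S D kk e (sig S D kk e v - 2) \ Up S D kk e (sig S D kk e v - 1) ⊆
        S \ Up S D kk e (sig S D kk e v - 1) := by
      intro u hu
      rw [Finset.mem_sdiff] at hu ⊢
      exact ⟨Up_subset S D kk e _ hu.1, hu.2⟩
    have hle : ∑ w ∈ Up S D kk e (sig S D kk e v - 2) \ Up S D kk e (sig S D kk e v - 1), a v w
        ≤ ∑ w ∈ S \ Up S D kk e (sig S D kk e v - 1), a v w :=
      Finset.sum_le_sum_of_subset hsub
    unfold mvp
    omega

variable {a S out D kk} in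
lemma etaOf_eq (prec : V → (V × ℕ) → (V × ℕ) → Prop) {e : V → Option (V × ℕ)} (v : V) :
    etaOf a S out D kk prec e v =
      ∑ w ∈ Up S D kk e (sig S D kk e v - 1), a v w + ellp a S out D kk prec e v := by
  have h := mvp_add a S out D kk e v
  unfold etaOf
  omega

variable {a S out D kk} in
lemma U_eq_Up (hmono : Monotone D) (hD0 : D 0 = ∅)
    (prec : V → (V × ℕ) → (V × ℕ) → Prop)
    (hprec : ∀ v, IsStrictTotalOrder (V × ℕ) (prec v))
    (hdisj : ∀ v, ∀ w ∈ out v, w ∉ S)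
    {e : V → Option (V × ℕ)} (hT : IsSpanningTree a S out e) :
    ∀ m, U a S (etaOf a S out D kk prec e) D kk m = Up S D kk e m := by
  intro m
  induction m with
  | zero =>
    ext u
    show u ∈ S ↔ _
    rw [mem_Up]
    exact ⟨fun hu => ⟨hu, sig_pos (D := D) (kk := kk) hT u⟩, fun hu => hu.1⟩
  | succ m ih =>
    rw [U_succ, ih]
    ext u
    rw [Finset.mem_filter, mem_Up, mem_Up]
    constructor
    · rintro ⟨⟨huS, hm⟩, hkeep⟩
      refine ⟨huS, ?_⟩
      by_contra hc
      push_neg at hc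
      have hσ : sig S D kk e u = m + 1 := by omega
      have hq : qv D kk u * plen S ≤ m := by
        have := sig_ge (D := D) (kk := kk) hT u
        omega
      have hqd : qv D kk u ≤ m / plen S := (Nat.le_div_iff_mul_le (plen_pos S)).mpr hq
      have hnp : u ∉ D (kk - m / plen S) := (not_mem_D_iff hmono hD0).mpr hqd
      have hη := etaOf_eq (S := S) (D := D) (kk := kk) (a := a) (out := out) prec (e := e) u
      rw [hσ, Nat.add_sub_cancel] at hη
      rcases hkeep with h|h
      · exact hnp h
      · rw [hη] at h
        omega
    · rintro ⟨huS, hm1⟩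
      refine ⟨⟨huS, by omega⟩, ?_⟩
      by_cases hprot : m < qv D kk u * plen S
      · left
        have hdv : m / plen S < qv D kk u := by
          rw [Nat.div_lt_iff_lt_mul (plen_pos S)]
          exact hprot
        exact mem_D_of_lt_qv hdv
      · right
        push_neg at hprot
        have hmid : (sig S D kk e u - 1) % plen S ≠ 0 := by
          intro h0
          have := start_classify (D := D) (kk := kk) hT h0
          omega
        have hη := etaOf_eq (S := S) (D := D) (kk := kk) (a := a) (out := out) prec (e := e) u
        have hlt := ellp_lt_card (D := D) (kk := kk) prec hprec hT huS
        rw [card_Fvp_mid hmid] at hlt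
        have hsub : Up S D kk e (sig S D kk e u - 2) \ Up S D kk e (sig S D kk e u - 1) ⊆
            Up S D kk e m \ Up S D kk e (sig S D kk e u - 1) := by
          intro x hx
          rw [Finset.mem_sdiff] at hx ⊢
          exact ⟨Up_anti e (by omega) hx.1, hx.2⟩
        have hs1 : ∑ w ∈ Up S D kk e (sig S D kk e u - 2) \ Up S D kk e (sig S D kk e u - 1), a u w
            ≤ ∑ w ∈ Up S D kk e m \ Up S D kk e (sig S D kk e u - 1), a u w :=
          Finset.sum_le_sum_of_subset hsub
        have hs2 : ∑ w ∈ Up S D kk e m \ Up S D kk e (sig S D kk e u - 1), a u w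
            + ∑ w ∈ Up S D kk e (sig S D kk e u - 1), a u w
            = ∑ w ∈ Up S D kk e m, a u w :=
          Finset.sum_sdiff (Up_anti e (by omega))
        omega

variable {a S out D kk} in
lemma tau_eq_sig (hmono : Monotone D) (hD0 : D 0 = ∅)
    (prec : V → (V × ℕ) → (V × ℕ) → Prop)
    (hprec : ∀ v, IsStrictTotalOrder (V × ℕ) (prec v))
    (hdisj : ∀ v, ∀ w ∈ out v, w ∉ S)
    {e : V → Option (V × ℕ)} (hT : IsSpanningTree a S out e) {v : V} (hv : v ∈ S) :
    τ a S (etaOf a S out D kk prec e) D kk v = sig S D kk e v := by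
  have hU := U_eq_Up (kk := kk) hmono hD0 prec hprec hdisj hT
  have h1 : v ∉ U a S (etaOf a S out D kk prec e) D kk (sig S D kk e v) := by
    rw [hU]
    intro hc
    rw [mem_Up] at hc
    omega
  apply le_antisymm
  · exact Nat.sInf_le h1
  · by_contra hc
    push_neg at hc
    have hmem := Nat.sInf_mem (⟨sig S D kk e v, h1⟩ :
      Set.Nonempty {m | v ∉ U a S (etaOf a S out D kk prec e) D kk m})
    rw [Set.mem_setOf_eq, hU] at hmem
    exact hmem (mem_Up.mpr ⟨hv, hc⟩)

variable {a S out D kk} in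
lemma surjectivity (hmono : Monotone D) (hD0 : D 0 = ∅)
    (prec : V → (V × ℕ) → (V × ℕ) → Prop)
    (hprec : ∀ v, IsStrictTotalOrder (V × ℕ) (prec v))
    (hdisj : ∀ v, ∀ w ∈ out v, w ∉ S)
    {e : V → Option (V × ℕ)} (hT : IsSpanningTree a S out e) :
    ∃ η, Recurrent a S out η ∧ Spec a S out η D kk prec e := by
  refine ⟨etaOf a S out D kk prec e, ⟨?_, ?_⟩, ?_, ?_⟩
  · -- stable
    intro v hv
    have h1 := ellp_lt_mvp (D := D) (kk := kk) prec hprec hdisj hT hv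
    have h2 := mvp_add a S out D kk e v
    unfold etaOf
    omega
  · -- ample
    intro F hFS hFne
    obtain ⟨x, hxF, hmin⟩ := Finset.exists_min_image F (sig S D kk e) hFne
    refine ⟨x, hxF, ?_⟩
    have hsub : F ⊆ Up S D kk e (sig S D kk e x - 1) := by
      intro y hy
      rw [mem_Up]
      have h1 := sig_pos (D := D) (kk := kk) hT x
      have := hmin y hy
      exact ⟨hFS hy, by omega⟩
    have hle : ∑ y ∈ F, a x y ≤ ∑ y ∈ Up S D kk e (sig S D kk e x - 1), a x y :=
      Finset.sum_le_sum_of_subset hsub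
    rw [etaOf_eq (S := S) (D := D) (kk := kk) (a := a) (out := out) prec (e := e) x]
    omega
  · -- Spec off S
    intro v hv
    exact hT.1 v hv
  · -- Spec on S
    intro v hv
    have hUf : U a S (etaOf a S out D kk prec e) D kk = Up S D kk e :=
      funext (U_eq_Up (kk := kk) hmono hD0 prec hprec hdisj hT)
    have hτ := tau_eq_sig (kk := kk) hmono hD0 prec hprec hdisj hT hv
    have hFv : Fv a S out (etaOf a S out D kk prec e) D kk v = Fvp a S out D kk e v := by
      unfold Fv Fvp
      rw [hUf, hτ]
    have hmv : mv a S out (etaOf a S out D kk prec e) D kk v = mvp a S out D kk e v := by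
      unfold mv mvp
      rw [hUf, hτ]
    refine ⟨(e v).getD (v, 0), pe_eq hT hv, ?_, ?_⟩
    · rw [hFv]
      exact pe_mem_Fvp (D := D) (kk := kk) hT hv
    · rw [hFv, hmv]
      have h1 := ellp_lt_mvp (D := D) (kk := kk) prec hprec hdisj hT hv
      have h2 := mvp_add a S out D kk e v
      have hcard : ((Fvp a S out D kk e v).filter
          fun f => prec v f ((e v).getD (v, 0))).card = ellp a S out D kk prec e v := rfl
      rw [hcard]
      unfold etaOf
      omega

end Anchored

/-- The anchored burning map `φ_{D,Λ} : R_Λ → T_Λ` on the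
wired graph `G_Λ` (`S = Λ`, sink edges to `out v = nbrs v \ Λ`) is well
defined and injective on recurrent configurations, and consequently a
bijection between `R_Λ` and the spanning trees `T_Λ`. -/
theorem stmt5 {V : Type*} [DecidableEq V] [Infinite V]
    (a : V → V → ℕ) (nbrs : V → Finset V)
    (hsymm : ∀ u v, a u v = a v u) (hloop : ∀ v, a v v = 0)
    (hnbrs : ∀ v w, w ∈ nbrs v ↔ 0 < a v w)
    (hconn : ∀ u v : V, Anchored.ReachAvoid a ∅ u v)
    (S : Finset V) (hS : S.Nonempty)
    (D : ℕ → Finset V) (hmono : Monotone D) (hD0 : D 0 = ∅)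
    (hcover : ∀ v, ∃ j, v ∈ D j)
    (hsc : ∀ j, 1 ≤ j → ∀ v ∉ D j, {w | Anchored.ReachAvoid a (D j) v w}.Infinite)
    (kk : ℕ) (hK : D kk ⊆ S) (hKmax : ∀ j, D j ⊆ S → j ≤ kk)
    (prec : V → (V × ℕ) → (V × ℕ) → Prop)
    (hprec : ∀ v, IsStrictTotalOrder (V × ℕ) (prec v))
    (out : V → Finset V) (hout : ∀ v, out v = nbrs v \ S) :
    (∀ η, Anchored.Recurrent a S out η →
        ∃ e, Anchored.Spec a S out η D kk prec e ∧
          Anchored.IsSpanningTree a S out e) ∧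
    (∀ η₁ η₂ e₁ e₂, Anchored.Recurrent a S out η₁ → Anchored.Recurrent a S out η₂ →
        Anchored.Spec a S out η₁ D kk prec e₁ →
        Anchored.Spec a S out η₂ D kk prec e₂ →
        e₁ = e₂ → ∀ v ∈ S, η₁ v = η₂ v) ∧
    (∀ e, Anchored.IsSpanningTree a S out e →
        ∃ η, Anchored.Recurrent a S out η ∧ Anchored.Spec a S out η D kk prec e) := by
  have hdisj : ∀ v, ∀ w ∈ out v, w ∉ S := by
    intro v w hw
    rw [hout v, Finset.mem_sdiff] at hw
    exact hw.2
  refine ⟨?_, ?_, ?_⟩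
  · intro η hR
    exact Anchored.forward hD0 hR prec hprec hdisj
  · intro η₁ η₂ e₁ e₂ hR1 hR2 hS1 hS2 he
    subst he
    exact Anchored.injectivity hmono hD0 hR1 hR2 prec hS1 hS2 hdisj
  · intro e hT
    exact Anchored.surjectivity hmono hD0 prec hprec hdisj hT
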